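/- Let [u] be a monogenic inverse semigroup, generated as an inverse semigroup by an element u. Then at least one of the following holds: (1) u is a periodic element (u^r = u^{r+s} for some r, s ≥ 1); (2) [u] has a subgroup isomorphic to the infinite cyclic group ℤ; (3) [u] has a subsemigroup isomorphic to the bicyclic monoid; (4) [u] is isomorphic to the free monogenic inverse semigroup. -/

import Mathlib

/-- `sgpow x n` is the `n`-th power `x^n` of `x` in a semigroup, for `n ≥ 1`
(with the junk value `sgpow x 0 = x`). -/
def sgpow {S : Type} [Semigroup S] (x : S) : ℕ → S
  | 0 => x
  | 1 => x
  | (n + 2) => sgpow x (n + 1) * x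

/-- Membership in Preston's model `F` of the free monogenic inverse semigroup:
triples `(-l, n, m)` with `l, n ∈ ℕ`, `m ∈ ℤ`, `0 < n + l` and `-l ≤ m ≤ n`. -/
def InF (p : ℤ × ℤ × ℤ) : Prop :=
  p.1 ≤ 0 ∧ 0 ≤ p.2.1 ∧ p.1 < p.2.1 ∧ p.1 ≤ p.2.2 ∧ p.2.2 ≤ p.2.1

/-- The multiplication of Preston's model `F`:
`(-l, n, m)·(-l', n', m') = ((-l) ∧ (m - l'), n ∨ (m + n'), m + m')`, where the
first coordinate is the meet (min) and the second the join (max). -/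
def pmul (p q : ℤ × ℤ × ℤ) : ℤ × ℤ × ℤ :=
  (min p.1 (p.2.2 + q.1), max p.2.1 (p.2.2 + q.2.1), p.2.2 + q.2.2)

/-- Preston's model of the free monogenic inverse semigroup. -/
def PrestonF : Type := {p : ℤ × ℤ × ℤ // InF p}

instance : Mul PrestonF :=
  ⟨fun x y => ⟨pmul x.1 y.1, by
    obtain ⟨⟨a, b, c⟩, h⟩ := x
    obtain ⟨⟨a', b', c'⟩, h'⟩ := y
    simp [InF, pmul] at h h' ⊢
    omega⟩⟩

instance : Semigroup PrestonF where
  mul_assoc x y z := by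
    apply Subtype.ext
    show pmul (pmul x.1 y.1) z.1 = pmul x.1 (pmul y.1 z.1)
    obtain ⟨⟨a, b, c⟩, h⟩ := x
    obtain ⟨⟨a', b', c'⟩, h'⟩ := y
    obtain ⟨⟨a'', b'', c''⟩, h''⟩ := z
    simp only [pmul, Prod.mk.injEq]
    omega

/-- The bicyclic monoid `Mon⟨b, c | bc = 1⟩`, modelled as `ℕ × ℕ` where `(m, n)`
stands for `cᵐbⁿ`. -/
def Bicyclic : Type := ℕ × ℕ

/-- Multiplication of the bicyclic monoid: `cᵐbⁿ · cᵖbᑫ = c^(m + (p ∸ n)) b^(q + (n ∸ p))`. -/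
def bmul (x y : ℕ × ℕ) : ℕ × ℕ := (x.1 + (y.1 - x.2), y.2 + (x.2 - y.1))

instance : Monoid Bicyclic where
  mul x y := bmul x y
  one := ((0, 0) : ℕ × ℕ)
  mul_assoc x y z := by
    show bmul (bmul x y) z = bmul x (bmul y z)
    simp only [bmul, Prod.mk.injEq]
    omega
  one_mul x := by
    obtain ⟨a, b⟩ := x
    show bmul (0, 0) (a, b) = (a, b)
    simp only [bmul, Prod.mk.injEq]
    omega
  mul_one x := by
    obtain ⟨a, b⟩ := x
    show bmul (a, b) (0, 0) = (a, b)
    simp only [bmul, Prod.mk.injEq]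
    omega

namespace MIS

lemma pmul_eq (a b c a' b' c' : ℤ) :
    pmul (a,b,c) (a',b',c') = (min a (c+a'), max b (c+b'), c+c') := rfl

lemma InF_mk (a b c : ℤ) : InF (a,b,c) ↔ (a ≤ 0 ∧ 0 ≤ b ∧ a < b ∧ a ≤ c ∧ c ≤ b) := Iff.rfl

lemma InF_pmul {p q : ℤ × ℤ × ℤ} (hp : InF p) (hq : InF q) : InF (pmul p q) := by
  obtain ⟨a,b,c⟩ := p; obtain ⟨a',b',c'⟩ := q
  simp only [InF, pmul] at *
  omega

lemma passoc (p q r : ℤ × ℤ × ℤ) : pmul (pmul p q) r = pmul p (pmul q r) := by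
  obtain ⟨a,b,c⟩ := p; obtain ⟨a',b',c'⟩ := q; obtain ⟨a'',b'',c''⟩ := r
  simp only [pmul, Prod.mk.injEq]
  omega

variable {S : Type} [Semigroup S] (inv : S → S)

section Sside
variable (hinv : ∀ x : S, x * inv x * x = x ∧ inv x * x * inv x = inv x)
variable (huniq : ∀ x y : S, x * y * x = x → y * x * y = y → y = inv x)
set_option linter.unusedSectionVars false
include hinv huniq

lemma inv_invol (x : S) : inv (inv x) = x :=
  (huniq (inv x) x (hinv x).2 (hinv x).1).symm

lemma inv_idem {e : S} (he : e * e = e) : inv e = e :=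
  (huniq e e (by rw [he, he]) (by rw [he, he])).symm

lemma idem_mul {e f : S} (he : e * e = e) (hf : f * f = f) :
    (e * f) * (e * f) = e * f := by
  set x := inv (e * f) with hx
  have h2' : x * (e * (f * x)) = x := by
    simpa only [mul_assoc] using (hinv (e * f)).2
  have hg1 : (e * f) * (f * x * e) * (e * f) = e * f := by
    calc (e * f) * (f * x * e) * (e * f)
        = (e * (f * f)) * x * ((e * e) * f) := by simp only [mul_assoc]
      _ = (e * f) * x * (e * f) := by rw [hf, he]
      _ = e * f := (hinv (e * f)).1
  have hg2 : (f * x * e) * (e * f) * (f * x * e) = f * x * e := by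
    calc (f * x * e) * (e * f) * (f * x * e)
        = f * (x * ((e * e) * ((f * f) * (x * e)))) := by simp only [mul_assoc]
      _ = f * (x * (e * (f * (x * e)))) := by rw [he, hf]
      _ = f * ((x * (e * (f * x))) * e) := by simp only [mul_assoc]
      _ = f * (x * e) := by rw [h2']
      _ = f * x * e := by simp only [mul_assoc]
  have hgg : (f * x * e) * (f * x * e) = f * x * e := by
    calc (f * x * e) * (f * x * e)
        = f * ((x * (e * (f * x))) * e) := by simp only [mul_assoc]
      _ = f * (x * e) := by rw [h2']
      _ = f * x * e := by simp only [mul_assoc]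
  have hgi : f * x * e = inv (e * f) := huniq (e * f) (f * x * e) hg1 hg2
  have key : e * f = f * x * e := by
    conv_lhs => rw [← inv_invol inv hinv huniq (e * f)]
    rw [← hgi, inv_idem inv hinv huniq hgg]
  rw [key]; exact hgg

omit hinv huniq in
lemma labs {a : S} (ha : a * a = a) (t : S) : a * (a * t) = a * t := by
  rw [← mul_assoc, ha]

lemma idem_comm {e f : S} (he : e * e = e) (hf : f * f = f) :
    e * f = f * e := by
  have hef := idem_mul inv hinv huniq he hf
  have hfe := idem_mul inv hinv huniq hf he
  have h1 : (e * f) * (f * e) * (e * f) = e * f := by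
    calc (e * f) * (f * e) * (e * f)
        = e * (f * (f * (e * (e * f)))) := by simp only [mul_assoc]
      _ = e * (f * (e * (e * f))) := by rw [labs hf]
      _ = e * (f * (e * f)) := by rw [labs he]
      _ = (e * f) * (e * f) := by simp only [mul_assoc]
      _ = e * f := hef
  have h2 : (f * e) * (e * f) * (f * e) = f * e := by
    calc (f * e) * (e * f) * (f * e)
        = f * (e * (e * (f * (f * e)))) := by simp only [mul_assoc]
      _ = f * (e * (f * (f * e))) := by rw [labs he]
      _ = f * (e * (f * e)) := by rw [labs hf]
      _ = (f * e) * (f * e) := by simp only [mul_assoc]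
      _ = f * e := hfe
  have : f * e = inv (e * f) := huniq (e * f) (f * e) h1 h2
  rw [this, inv_idem inv hinv huniq hef]

lemma inv_mul (x y : S) : inv (x * y) = inv y * inv x := by
  have hyy : (y * inv y) * (y * inv y) = y * inv y := by
    have : (y * inv y) * (y * inv y) = (y * inv y * y) * inv y := by
      simp only [mul_assoc]
    rw [this, (hinv y).1]
  have hxx : (inv x * x) * (inv x * x) = inv x * x := by
    have : (inv x * x) * (inv x * x) = (inv x * x * inv x) * x := by
      simp only [mul_assoc]
    rw [this, (hinv x).2]
  have hc : ∀ t, (y * inv y) * ((inv x * x) * t) = (inv x * x) * ((y * inv y) * t) := by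
    intro t
    rw [← mul_assoc, idem_comm inv hinv huniq hyy hxx, mul_assoc]
  have h1 : (x * y) * (inv y * inv x) * (x * y) = x * y := by
    calc (x * y) * (inv y * inv x) * (x * y)
        = x * ((y * inv y) * ((inv x * x) * y)) := by simp only [mul_assoc]
      _ = x * ((inv x * x) * ((y * inv y) * y)) := by rw [hc]
      _ = x * ((inv x * x) * y) := by
          congr 1; congr 1
          calc (y * inv y) * y = y * inv y * y := rfl
            _ = y := (hinv y).1
      _ = x * y := by
          rw [← mul_assoc, ← mul_assoc, (hinv x).1]
  have h2 : (inv y * inv x) * (x * y) * (inv y * inv x) = inv y * inv x := by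
    have hc2 : ∀ t, (inv x * x) * ((y * inv y) * t) = (y * inv y) * ((inv x * x) * t) := by
      intro t
      rw [← mul_assoc, idem_comm inv hinv huniq hxx hyy, mul_assoc]
    calc (inv y * inv x) * (x * y) * (inv y * inv x)
        = inv y * ((inv x * x) * ((y * inv y) * inv x)) := by simp only [mul_assoc]
      _ = inv y * ((y * inv y) * ((inv x * x) * inv x)) := by rw [hc2]
      _ = inv y * ((y * inv y) * inv x) := by
          congr 1; congr 1
          calc (inv x * x) * inv x = inv x * x * inv x := rfl
            _ = inv x := (hinv x).2
      _ = inv y * inv x := by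
          rw [← mul_assoc, ← mul_assoc, (hinv y).2]
  exact (huniq (x * y) (inv y * inv x) h1 h2).symm

omit hinv huniq in
lemma sgpow_comm (y : S) : ∀ n, y * sgpow y n = sgpow y n * y
  | 0 => rfl
  | 1 => rfl
  | (n + 2) => by
      show y * (sgpow y (n+1) * y) = (sgpow y (n+1) * y) * y
      rw [← mul_assoc, ← sgpow_comm y (n+1)]

lemma inv_sgpow (x : S) : ∀ n, inv (sgpow x n) = sgpow (inv x) n
  | 0 => rfl
  | 1 => rfl
  | (n + 2) => by
      show inv (sgpow x (n+1) * x) = sgpow (inv x) (n+1) * inv x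
      rw [inv_mul inv hinv huniq, inv_sgpow x (n+1), sgpow_comm]

end Sside

section Mside
variable (hinv : ∀ x : S, x * inv x * x = x ∧ inv x * x * inv x = inv x)
variable (huniq : ∀ x y : S, x * y * x = x → y * x * y = y → y = inv x)
set_option linter.unusedSectionVars false

lemma coe_sgpow (x : S) : ∀ n : ℕ, ((sgpow x (n+1) : S) : WithOne S) = (x : WithOne S)^(n+1)
  | 0 => by simp [sgpow]
  | (n+1) => by
      show ((sgpow x (n+1) * x : S) : WithOne S) = _
      rw [WithOne.coe_mul, coe_sgpow x n]; exact (pow_succ _ _).symm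

include hinv huniq

lemma M1 (x : S) : ∀ n : ℕ,
    (x : WithOne S)^n * ((inv x : S) : WithOne S)^n * (x : WithOne S)^n = (x : WithOne S)^n
  | 0 => by simp
  | (n+1) => by
      rw [← coe_sgpow x n, ← coe_sgpow (inv x) n, ← WithOne.coe_mul, ← WithOne.coe_mul]
      rw [show sgpow (inv x) (n+1) = inv (sgpow x (n+1)) from (inv_sgpow inv hinv huniq x (n+1)).symm]
      rw [(hinv (sgpow x (n+1))).1]

lemma M1' (x : S) : ∀ n : ℕ,
    ((inv x : S) : WithOne S)^n * (x : WithOne S)^n * ((inv x : S) : WithOne S)^n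
      = ((inv x : S) : WithOne S)^n
  | 0 => by simp
  | (n+1) => by
      rw [← coe_sgpow x n, ← coe_sgpow (inv x) n, ← WithOne.coe_mul, ← WithOne.coe_mul]
      rw [show sgpow (inv x) (n+1) = inv (sgpow x (n+1)) from (inv_sgpow inv hinv huniq x (n+1)).symm]
      rw [(hinv (sgpow x (n+1))).2]

lemma M3 (x : S) (i j : ℕ) :
    ((x : WithOne S)^i * ((inv x : S) : WithOne S)^i) * (((inv x : S) : WithOne S)^j * (x : WithOne S)^j)
      = (((inv x : S) : WithOne S)^j * (x : WithOne S)^j) * ((x : WithOne S)^i * ((inv x : S) : WithOne S)^i) := by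
  rcases i with _ | i
  · simp
  rcases j with _ | j
  · simp
  rw [← coe_sgpow x i, ← coe_sgpow (inv x) i, ← coe_sgpow x j, ← coe_sgpow (inv x) j]
  rw [← WithOne.coe_mul, ← WithOne.coe_mul, ← WithOne.coe_mul, ← WithOne.coe_mul]
  congr 1
  have hxi : sgpow x (i+1) * sgpow (inv x) (i+1) * sgpow x (i+1) = sgpow x (i+1) := by
    rw [show sgpow (inv x) (i+1) = inv (sgpow x (i+1)) from (inv_sgpow inv hinv huniq x (i+1)).symm]
    exact (hinv (sgpow x (i+1))).1
  have hxj : sgpow (inv x) (j+1) * sgpow x (j+1) * sgpow (inv x) (j+1) = sgpow (inv x) (j+1) := by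
    rw [show sgpow (inv x) (j+1) = inv (sgpow x (j+1)) from (inv_sgpow inv hinv huniq x (j+1)).symm]
    exact (hinv (sgpow x (j+1))).2
  have he : (sgpow x (i+1) * sgpow (inv x) (i+1)) * (sgpow x (i+1) * sgpow (inv x) (i+1))
      = sgpow x (i+1) * sgpow (inv x) (i+1) := by
    calc (sgpow x (i+1) * sgpow (inv x) (i+1)) * (sgpow x (i+1) * sgpow (inv x) (i+1))
        = (sgpow x (i+1) * sgpow (inv x) (i+1) * sgpow x (i+1)) * sgpow (inv x) (i+1) := by
          simp only [mul_assoc]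
      _ = _ := by rw [hxi]
  have hf : (sgpow (inv x) (j+1) * sgpow x (j+1)) * (sgpow (inv x) (j+1) * sgpow x (j+1))
      = sgpow (inv x) (j+1) * sgpow x (j+1) := by
    calc (sgpow (inv x) (j+1) * sgpow x (j+1)) * (sgpow (inv x) (j+1) * sgpow x (j+1))
        = (sgpow (inv x) (j+1) * sgpow x (j+1) * sgpow (inv x) (j+1)) * sgpow x (j+1) := by
          simp only [mul_assoc]
      _ = _ := by rw [hxj]
  exact idem_comm inv hinv huniq he hf

lemma M5 (x : S) (a i : ℕ) :
    (x : WithOne S)^a * ((x : WithOne S)^i * ((inv x : S) : WithOne S)^i)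
      = ((x : WithOne S)^(a+i) * ((inv x : S) : WithOne S)^(a+i)) * (x : WithOne S)^a := by
  set Mu := (x : WithOne S)
  set Mv := ((inv x : S) : WithOne S)
  calc Mu^a * (Mu^i * Mv^i)
      = (Mu^a * Mv^a * Mu^a) * (Mu^i * Mv^i) := by rw [M1 inv hinv huniq x a]
    _ = Mu^a * ((Mv^a * Mu^a) * (Mu^i * Mv^i)) := by simp only [mul_assoc]
    _ = Mu^a * ((Mu^i * Mv^i) * (Mv^a * Mu^a)) := by rw [← M3 inv hinv huniq x i a]
    _ = Mu^a * Mu^i * (Mv^i * (Mv^a * Mu^a)) := by simp only [mul_assoc]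
    _ = (Mu^a * Mu^i) * ((Mv^i * Mv^a) * Mu^a) := by simp only [mul_assoc]
    _ = Mu^(a+i) * Mv^(a+i) * Mu^a := by
        rw [← pow_add, ← pow_add, Nat.add_comm i a]
        simp only [mul_assoc]

lemma M6 (x : S) (d z : ℕ) :
    ((inv x : S) : WithOne S)^(z+d) * ((x : WithOne S)^z * ((inv x : S) : WithOne S)^z)
      = ((inv x : S) : WithOne S)^(z+d) := by
  set Mu := (x : WithOne S)
  set Mv := ((inv x : S) : WithOne S)
  calc Mv^(z+d) * (Mu^z * Mv^z)
      = Mv^d * (Mv^z * Mu^z * Mv^z) := by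
        rw [Nat.add_comm z d, pow_add]; simp only [mul_assoc]
    _ = Mv^d * Mv^z := by rw [M1' inv hinv huniq x z]
    _ = Mv^(z+d) := by rw [← pow_add, Nat.add_comm]

lemma M7 (x : S) (n : ℕ) :
    (x : WithOne S) * (((inv x : S) : WithOne S)^(n+1) * (x : WithOne S)^(n+1))
      = (((inv x : S) : WithOne S)^n * (x : WithOne S)^n) * (x : WithOne S) := by
  set Mu := (x : WithOne S)
  set Mv := ((inv x : S) : WithOne S)
  have h1 : Mu * Mv * Mu = Mu := by
    have := M1 inv hinv huniq x 1
    simpa [pow_one] using this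
  calc Mu * (Mv^(n+1) * Mu^(n+1))
      = (Mu^1 * Mv^1) * ((Mv^n * Mu^n) * Mu^1) := by
        rw [pow_succ' Mv n, pow_succ Mu n]
        simp only [pow_one, mul_assoc]
    _ = ((Mu^1 * Mv^1) * (Mv^n * Mu^n)) * Mu^1 := by simp only [mul_assoc]
    _ = ((Mv^n * Mu^n) * (Mu^1 * Mv^1)) * Mu^1 := by rw [M3 inv hinv huniq x 1 n]
    _ = (Mv^n * Mu^n) * (Mu * Mv * Mu) := by simp only [pow_one, mul_assoc]
    _ = (Mv^n * Mu^n) * Mu := by rw [h1]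


def Phi (x : S) (p : ℤ × ℤ × ℤ) : WithOne S :=
  (x : WithOne S)^(p.2.1.toNat) * ((inv x : S) : WithOne S)^((p.2.1 - p.1).toNat)
    * (x : WithOne S)^((p.2.2 - p.1).toNat)

lemma Phi_gen (x : S) : Phi inv x (0,1,1) = (x : WithOne S) := by
  have h := M1 inv hinv huniq x 1
  simp only [Phi]
  norm_num
  simpa [pow_one] using h

omit hinv huniq in
lemma Phi_gen' (x : S) : Phi inv x (-1,0,-1) = ((inv x : S) : WithOne S) := by
  simp only [Phi]
  norm_num

lemma Lgen (x : S) (A B c : ℤ) (h : InF (A,B,c)) :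
    Phi inv x (pmul (A,B,c) (0,1,1)) = Phi inv x (A,B,c) * (x : WithOne S) := by
  rw [InF_mk] at h
  obtain ⟨h1,h2,h3,h4,h5⟩ := h
  set Mu := (x : WithOne S) with hMu
  set Mv := ((inv x : S) : WithOne S) with hMv
  by_cases hc : c = B
  · have hp : pmul (A,B,c) (0,1,1) = (A, B+1, B+1) := by
      simp [pmul, Prod.ext_iff] <;> omega
    rw [hp]
    show Mu^(B+1).toNat * Mv^(B+1-A).toNat * Mu^(B+1-A).toNat
        = Mu^B.toNat * Mv^(B-A).toNat * Mu^(c-A).toNat * Mu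
    have e1 : (B+1).toNat = B.toNat + 1 := by omega
    have e2 : (B+1-A).toNat = (B-A).toNat + 1 := by omega
    have e3 : (c-A).toNat = (B-A).toNat := by omega
    rw [e1, e2, e3]
    calc Mu^(B.toNat+1) * Mv^((B-A).toNat+1) * Mu^((B-A).toNat+1)
        = Mu^B.toNat * (Mu * (Mv^((B-A).toNat+1) * Mu^((B-A).toNat+1))) := by
          rw [pow_succ]; simp only [mul_assoc]
      _ = Mu^B.toNat * ((Mv^(B-A).toNat * Mu^(B-A).toNat) * Mu) := by
          rw [M7 inv hinv huniq x]
      _ = Mu^B.toNat * Mv^(B-A).toNat * Mu^(B-A).toNat * Mu := by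
          simp only [mul_assoc]
  · have hp : pmul (A,B,c) (0,1,1) = (A, B, c+1) := by
      simp [pmul, Prod.ext_iff] <;> omega
    rw [hp]
    show Mu^B.toNat * Mv^(B-A).toNat * Mu^(c+1-A).toNat
        = Mu^B.toNat * Mv^(B-A).toNat * Mu^(c-A).toNat * Mu
    have e : (c+1-A).toNat = (c-A).toNat + 1 := by omega
    rw [e, pow_succ]
    simp only [mul_assoc]

lemma Lgen' (x : S) (A B c : ℤ) (h : InF (A,B,c)) :
    Phi inv x (pmul (A,B,c) (-1,0,-1)) = Phi inv x (A,B,c) * ((inv x : S) : WithOne S) := by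
  rw [InF_mk] at h
  obtain ⟨h1,h2,h3,h4,h5⟩ := h
  set Mu := (x : WithOne S) with hMu
  set Mv := ((inv x : S) : WithOne S) with hMv
  by_cases hc : c = A
  · have hp : pmul (A,B,c) (-1,0,-1) = (A-1, B, c-1) := by
      simp [pmul, Prod.ext_iff] <;> omega
    rw [hp]
    show Mu^B.toNat * Mv^(B-(A-1)).toNat * Mu^(c-1-(A-1)).toNat
        = Mu^B.toNat * Mv^(B-A).toNat * Mu^(c-A).toNat * Mv
    have e1 : (B-(A-1)).toNat = (B-A).toNat + 1 := by omega
    have e2 : (c-1-(A-1)).toNat = 0 := by omega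
    have e3 : (c-A).toNat = 0 := by omega
    rw [e1, e2, e3, pow_succ]
    simp only [pow_zero, mul_one, mul_assoc]
  · have hp : pmul (A,B,c) (-1,0,-1) = (A, B, c-1) := by
      simp [pmul, Prod.ext_iff] <;> omega
    rw [hp]
    show Mu^B.toNat * Mv^(B-A).toNat * Mu^(c-1-A).toNat
        = Mu^B.toNat * Mv^(B-A).toNat * Mu^(c-A).toNat * Mv
    obtain ⟨z, hz⟩ : ∃ z : ℕ, (c-A).toNat = z + 1 := ⟨(c-1-A).toNat, by omega⟩
    have e : (c-1-A).toNat = z := by omega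
    rw [e, hz]
    obtain ⟨d, hd⟩ : ∃ d : ℕ, (B-A).toNat = (z+1) + d := ⟨(B-c).toNat, by omega⟩
    have key : Mu^(z+1) * Mv = Mu^(z+1) * Mv^(z+1) * Mu^z := by
      have h5' := M5 inv hinv huniq x z 1
      rw [pow_one, pow_one] at h5'
      rw [← h5', pow_succ]
      simp only [hMu, hMv, mul_assoc]
    have habs : Mv^(B-A).toNat * (Mu^(z+1) * Mv^(z+1)) = Mv^(B-A).toNat := by
      rw [hd]; exact M6 inv hinv huniq x d (z+1)
    symm
    calc Mu^B.toNat * Mv^(B-A).toNat * Mu^(z+1) * Mv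
        = Mu^B.toNat * (Mv^(B-A).toNat * (Mu^(z+1) * Mv)) := by simp only [mul_assoc]
      _ = Mu^B.toNat * (Mv^(B-A).toNat * (Mu^(z+1) * Mv^(z+1) * Mu^z)) := by rw [key]
      _ = Mu^B.toNat * ((Mv^(B-A).toNat * (Mu^(z+1) * Mv^(z+1))) * Mu^z) := by
          simp only [mul_assoc]
      _ = Mu^B.toNat * (Mv^(B-A).toNat * Mu^z) := by rw [habs]
      _ = Mu^B.toNat * Mv^(B-A).toNat * Mu^z := by simp only [mul_assoc]

omit hinv huniq in
lemma F_ind (Pr : ℤ × ℤ × ℤ → Prop) (hg : Pr (0,1,1)) (hg' : Pr (-1,0,-1))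
    (hm : ∀ p q, InF p → InF q → Pr p → Pr q → Pr (pmul p q)) :
    ∀ p, InF p → Pr p := by
  have hpa : ∀ t : ℕ, Pr (0, (t:ℤ)+1, (t:ℤ)+1) := by
    intro t
    induction t with
    | zero => exact_mod_cast hg
    | succ t ih =>
        have hF1 : InF (0, (t:ℤ)+1, (t:ℤ)+1) := by rw [InF_mk]; omega
        have hF2 : InF ((0:ℤ),1,1) := by rw [InF_mk]; omega
        have := hm _ _ hF1 hF2 ih hg
        have he : pmul (0, (t:ℤ)+1, (t:ℤ)+1) ((0:ℤ),1,1) = (0, (t:ℤ)+1+1, (t:ℤ)+1+1) := by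
          simp [pmul, Prod.ext_iff] <;> omega
        rw [he] at this
        exact_mod_cast this
  have hpa' : ∀ t : ℕ, Pr (-(t:ℤ)-1, 0, -(t:ℤ)-1) := by
    intro t
    induction t with
    | zero => exact_mod_cast hg'
    | succ t ih =>
        have hF1 : InF (-(t:ℤ)-1, 0, -(t:ℤ)-1) := by rw [InF_mk]; omega
        have hF2 : InF ((-1:ℤ),0,-1) := by rw [InF_mk]; omega
        have := hm _ _ hF1 hF2 ih hg'
        have he : pmul (-(t:ℤ)-1, 0, -(t:ℤ)-1) ((-1:ℤ),0,-1) = (-(t:ℤ)-1-1, 0, -(t:ℤ)-1-1) := by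
          simp [pmul, Prod.ext_iff] <;> omega
        rw [he] at this
        have he2 : ((-(((t:ℕ)+1 : ℕ):ℤ)-1 : ℤ), (0:ℤ), (-(((t:ℕ)+1 : ℕ):ℤ)-1 : ℤ)) = (-(t:ℤ)-1-1, 0, -(t:ℤ)-1-1) := by
          simp [Prod.ext_iff] <;> push_cast <;> omega
        rw [he2]; exact this
  have hApow : ∀ B : ℤ, 0 < B → Pr (0, B, B) := by
    intro B hB
    obtain ⟨t, rfl⟩ : ∃ t : ℕ, B = (t:ℤ)+1 := ⟨(B-1).toNat, by omega⟩
    exact hpa t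
  have hA'pow : ∀ A : ℤ, A < 0 → Pr (A, 0, A) := by
    intro A hA
    obtain ⟨t, rfl⟩ : ∃ t : ℕ, A = -(t:ℤ)-1 := ⟨(-A-1).toNat, by omega⟩
    exact hpa' t
  have hFa : ∀ B : ℤ, 0 < B → InF (0, B, B) := by intro B hB; rw [InF_mk]; omega
  have hFa' : ∀ A : ℤ, A < 0 → InF (A, 0, A) := by intro A hA; rw [InF_mk]; omega
  have hA0 : ∀ B c : ℤ, 0 < B → 0 ≤ c → c ≤ B → Pr (0, B, c) := by
    intro B c hB hc0 hcB
    rcases eq_or_lt_of_le hcB with he | hlt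
    · subst he; exact hApow _ hB
    · have h := hm _ _ (hFa B hB) (hFa' (c-B) (by omega)) (hApow B hB) (hA'pow (c-B) (by omega))
      have he : pmul (0, B, B) (c-B, 0, c-B) = (0, B, c) := by
        simp [pmul, Prod.ext_iff] <;> omega
      rwa [he] at h
  have hB0 : ∀ A c : ℤ, A < 0 → A ≤ c → c ≤ 0 → Pr (A, 0, c) := by
    intro A c hA hAc hc0
    rcases eq_or_lt_of_le hAc with he | hlt
    · subst he; exact hA'pow _ hA
    · have h := hm _ _ (hFa' A hA) (hFa (c-A) (by omega)) (hA'pow A hA) (hApow (c-A) (by omega))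
      have he : pmul (A, 0, A) (0, c-A, c-A) = (A, 0, c) := by
        simp [pmul, Prod.ext_iff] <;> omega
      rwa [he] at h
  have hMid : ∀ A c : ℤ, A < 0 → 0 < c → Pr (A, c, c) := by
    intro A c hA hc
    have h := hm _ _ (hFa' A hA) (hFa (c-A) (by omega)) (hA'pow A hA) (hApow (c-A) (by omega))
    have he : pmul (A, 0, A) (0, c-A, c-A) = (A, c, c) := by
      simp [pmul, Prod.ext_iff] <;> omega
    rwa [he] at h
  rintro ⟨A, B, c⟩ hF
  rw [InF_mk] at hF
  obtain ⟨h1, h2, h3, h4, h5⟩ := hF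
  rcases eq_or_lt_of_le h1 with hA | hA
  · subst hA
    exact hA0 B c h3 h4 h5
  · rcases eq_or_lt_of_le h2 with hB | hB
    · rw [← hB]
      rw [← hB] at h3 h5
      exact hB0 A c hA h4 h5
    · by_cases hc1 : 0 < c
      · have h := hm _ _ (by rw [InF_mk]; omega : InF ((0:ℤ), B, 0)) (by rw [InF_mk]; omega : InF (A, c, c))
          (hA0 B 0 hB le_rfl (by omega)) (hMid A c hA hc1)
        have he : pmul (0, B, 0) (A, c, c) = (A, B, c) := by
          simp [pmul, Prod.ext_iff] <;> omega
        rwa [he] at h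
      · have h := hm _ _ (by rw [InF_mk]; omega : InF ((0:ℤ), B, 0)) (by rw [InF_mk]; omega : InF (A, 0, c))
          (hA0 B 0 hB le_rfl (by omega)) (hB0 A c hA h4 (by omega))
        have he : pmul (0, B, 0) (A, 0, c) = (A, B, c) := by
          simp [pmul, Prod.ext_iff] <;> omega
        rwa [he] at h

def pinv (p : ℤ × ℤ × ℤ) : ℤ × ℤ × ℤ := (p.1 - p.2.2, p.2.1 - p.2.2, -p.2.2)

omit hinv huniq in
lemma InF_pinv {p : ℤ × ℤ × ℤ} (hp : InF p) : InF (pinv p) := by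
  obtain ⟨a,b,c⟩ := p
  simp only [InF, pinv] at *
  omega

lemma Pmul (x : S) : ∀ q, InF q → ∀ p, InF p →
    Phi inv x (pmul p q) = Phi inv x p * Phi inv x q := by
  refine F_ind (fun q => ∀ p, InF p → Phi inv x (pmul p q) = Phi inv x p * Phi inv x q)
    ?_ ?_ ?_
  · intro p hp
    obtain ⟨A,B,c⟩ := p
    rw [Lgen inv hinv huniq x A B c hp, Phi_gen inv hinv huniq x]
  · intro p hp
    obtain ⟨A,B,c⟩ := p
    rw [Lgen' inv hinv huniq x A B c hp, Phi_gen' inv x]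
  · intro q1 q2 h1 h2 ih1 ih2 p hp
    rw [← passoc, ih2 _ (InF_pmul hp h1), ih1 _ hp, ih2 _ h1, mul_assoc]

omit hinv huniq in
lemma coe_pow_mul (w : S) (n : ℕ) (s : S) :
    ∃ t : S, (w : WithOne S)^n * (s : WithOne S) = (t : WithOne S) := by
  rcases n with _ | n
  · exact ⟨s, by simp⟩
  · exact ⟨sgpow w (n+1) * s, by rw [WithOne.coe_mul, coe_sgpow]⟩

omit hinv huniq in
lemma mul_coe_pow (s : S) (w : S) (n : ℕ) :
    ∃ t : S, (s : WithOne S) * (w : WithOne S)^n = (t : WithOne S) := by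
  rcases n with _ | n
  · exact ⟨s, by simp⟩
  · exact ⟨s * sgpow w (n+1), by rw [WithOne.coe_mul, coe_sgpow]⟩

omit hinv huniq in
lemma Phi_coe (x : S) (p : ℤ × ℤ × ℤ) (hp : InF p) :
    ∃ s : S, Phi inv x p = (s : WithOne S) := by
  obtain ⟨A,B,c⟩ := p
  rw [InF_mk] at hp
  obtain ⟨y', hy⟩ : ∃ y' : ℕ, (B - A).toNat = y' + 1 := ⟨(B-A-1).toNat, by omega⟩
  show ∃ s : S, (x : WithOne S)^(B.toNat) * ((inv x : S) : WithOne S)^((B-A).toNat)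
    * (x : WithOne S)^((c-A).toNat) = (s : WithOne S)
  rw [hy, ← coe_sgpow (inv x) y']
  obtain ⟨t1, ht1⟩ := coe_pow_mul x B.toNat (sgpow (inv x) (y'+1))
  rw [ht1]
  obtain ⟨t2, ht2⟩ := mul_coe_pow t1 x (c-A).toNat
  exact ⟨t2, ht2⟩

/-- the image of the inverse triple is the inverse of the image -/
lemma Phi_pinv_eq_inv (x : S) (p : ℤ × ℤ × ℤ) (hp : InF p) (s t : S)
    (hs : Phi inv x p = (s : WithOne S)) (ht : Phi inv x (pinv p) = (t : WithOne S)) :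
    t = inv s := by
  have hip := InF_pinv hp
  have e1 : pmul (pmul p (pinv p)) p = p := by
    obtain ⟨a,b,c⟩ := p
    rw [InF_mk] at hp
    simp [pmul, pinv, Prod.ext_iff] <;> omega
  have e2 : pmul (pmul (pinv p) p) (pinv p) = pinv p := by
    obtain ⟨a,b,c⟩ := p
    rw [InF_mk] at hp
    simp [pmul, pinv, Prod.ext_iff] <;> omega
  have h1 : ((s * t * s : S) : WithOne S) = (s : WithOne S) := by
    rw [WithOne.coe_mul, WithOne.coe_mul, ← hs, ← ht,
      ← Pmul inv hinv huniq x (pinv p) hip p hp,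
      ← Pmul inv hinv huniq x p hp _ (InF_pmul hp hip), e1]
  have h2 : ((t * s * t : S) : WithOne S) = (t : WithOne S) := by
    rw [WithOne.coe_mul, WithOne.coe_mul, ← hs, ← ht,
      ← Pmul inv hinv huniq x p hp (pinv p) hip,
      ← Pmul inv hinv huniq x (pinv p) hip _ (InF_pmul hip hp), e2]
  exact huniq s t (WithOne.coe_inj.mp h1) (WithOne.coe_inj.mp h2)

lemma Phi_pinv_cong (x : S) {p q : ℤ × ℤ × ℤ} (hp : InF p) (hq : InF q)
    (h : Phi inv x p = Phi inv x q) : Phi inv x (pinv p) = Phi inv x (pinv q) := by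
  obtain ⟨s, hs⟩ := Phi_coe inv x p hp
  obtain ⟨t, ht⟩ := Phi_coe inv x (pinv p) (InF_pinv hp)
  obtain ⟨t', ht'⟩ := Phi_coe inv x (pinv q) (InF_pinv hq)
  have e1 : t = inv s := Phi_pinv_eq_inv inv hinv huniq x p hp s t hs ht
  have e2 : t' = inv s := Phi_pinv_eq_inv inv hinv huniq x q hq s t' (h ▸ hs) ht'
  rw [ht, ht', e1, e2]


/-- e-chain collapse at `k` -/
def ec (x : S) (k : ℤ) : Prop := Phi inv x (0,k,0) = Phi inv x (0,k+1,0)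
/-- f-chain collapse at `k` -/
def fc (x : S) (k : ℤ) : Prop := Phi inv x (-k,0,0) = Phi inv x (-(k+1),0,0)

lemma econj (x : S) (i : ℤ) (hi : 1 ≤ i) :
    Phi inv x (0,i+1,0)
      = Phi inv x ((0:ℤ),1,1) * Phi inv x (0,i,0) * Phi inv x ((-1:ℤ),0,-1) := by
  have hFa : InF ((0:ℤ),1,1) := by rw [InF_mk]; omega
  have hFi : InF ((0:ℤ),i,0) := by rw [InF_mk]; omega
  have hFg : InF ((-1:ℤ),0,-1) := by rw [InF_mk]; omega
  have c1 : pmul ((0:ℤ),1,1) (0,i,0) = (0, i+1, 1) := by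
    simp [pmul, Prod.ext_iff] <;> omega
  have h1 : Phi inv x (0,i+1,1) = Phi inv x ((0:ℤ),1,1) * Phi inv x (0,i,0) := by
    rw [← c1]; exact Pmul inv hinv huniq x _ hFi _ hFa
  have c2 : pmul ((0:ℤ),i+1,1) ((-1),0,(-1)) = (0, i+1, 0) := by
    simp [pmul, Prod.ext_iff] <;> omega
  have h2 : Phi inv x (0,i+1,0) = Phi inv x (0,i+1,1) * Phi inv x ((-1:ℤ),0,-1) := by
    rw [← c2]; exact Pmul inv hinv huniq x _ hFg _ (by rw [InF_mk]; omega)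
  rw [h2, h1]

lemma fconj (x : S) (i : ℤ) (hi : 1 ≤ i) :
    Phi inv x (-(i+1),0,0)
      = Phi inv x ((-1:ℤ),0,-1) * Phi inv x (-i,0,0) * Phi inv x ((0:ℤ),1,1) := by
  have hFa : InF ((0:ℤ),1,1) := by rw [InF_mk]; omega
  have hFi : InF ((-i:ℤ),0,0) := by rw [InF_mk]; omega
  have hFg : InF ((-1:ℤ),0,-1) := by rw [InF_mk]; omega
  have c1 : pmul ((-1:ℤ),0,(-1)) (-i,0,0) = (-1-i, 0, -1) := by
    simp [pmul, Prod.ext_iff] <;> omega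
  have h1 : Phi inv x (-1-i,0,-1) = Phi inv x ((-1:ℤ),0,-1) * Phi inv x (-i,0,0) := by
    rw [← c1]; exact Pmul inv hinv huniq x _ hFi _ hFg
  have c2 : pmul ((-1-i:ℤ),0,-1) ((0:ℤ),1,1) = (-1-i, 0, 0) := by
    simp [pmul, Prod.ext_iff] <;> omega
  have h2 : Phi inv x (-1-i,0,0) = Phi inv x (-1-i,0,-1) * Phi inv x ((0:ℤ),1,1) := by
    rw [← c2]; exact Pmul inv hinv huniq x _ hFa _ (by rw [InF_mk]; omega)
  have e3 : (-(i+1) : ℤ) = -1-i := by ring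
  rw [e3, h2, h1]

lemma E0 (x : S) (k : ℤ) (hk : 1 ≤ k) (hec : ec inv x k) :
    ∀ i, k ≤ i → Phi inv x (0,i,0) = Phi inv x (0,k,0) := by
  refine Int.le_induction rfl ?_
  intro i hik ih
  rw [econj inv hinv huniq x i (by omega), ih, ← econj inv hinv huniq x k (by omega)]
  exact hec.symm

lemma F0 (x : S) (k : ℤ) (hk : 1 ≤ k) (hfc : fc inv x k) :
    ∀ i, k ≤ i → Phi inv x (-i,0,0) = Phi inv x (-k,0,0) := by
  refine Int.le_induction rfl ?_
  intro i hik ih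
  rw [fconj inv hinv huniq x i (by omega), ih, ← fconj inv hinv huniq x k (by omega)]
  exact hfc.symm

lemma emono (x : S) {i j : ℤ} (hi : 1 ≤ i) (hij : i < j)
    (h : Phi inv x (0,i,0) = Phi inv x (0,j,0)) : ec inv x i := by
  have hFi1 : InF ((0:ℤ),i+1,0) := by rw [InF_mk]; omega
  have hFi : InF ((0:ℤ),i,0) := by rw [InF_mk]; omega
  have hFj : InF ((0:ℤ),j,0) := by rw [InF_mk]; omega
  have c1 : pmul ((0:ℤ),i+1,0) (0,i,0) = (0,i+1,0) := by
    simp [pmul, Prod.ext_iff] <;> omega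
  have h1 : Phi inv x (0,i+1,0) = Phi inv x (0,i+1,0) * Phi inv x (0,i,0) := by
    conv_lhs => rw [← c1]
    exact Pmul inv hinv huniq x _ hFi _ hFi1
  have c2 : pmul ((0:ℤ),i+1,0) (0,j,0) = (0,j,0) := by
    simp [pmul, Prod.ext_iff] <;> omega
  have h2 : Phi inv x (0,j,0) = Phi inv x (0,i+1,0) * Phi inv x (0,j,0) := by
    conv_lhs => rw [← c2]
    exact Pmul inv hinv huniq x _ hFj _ hFi1
  show Phi inv x (0,i,0) = Phi inv x (0,i+1,0)
  rw [h, h2, ← h, ← h1]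

lemma fmono (x : S) {i j : ℤ} (hi : 1 ≤ i) (hij : i < j)
    (h : Phi inv x (-i,0,0) = Phi inv x (-j,0,0)) : fc inv x i := by
  have hFi1 : InF ((-(i+1):ℤ),0,0) := by rw [InF_mk]; omega
  have hFi : InF ((-i:ℤ),0,0) := by rw [InF_mk]; omega
  have hFj : InF ((-j:ℤ),0,0) := by rw [InF_mk]; omega
  have c1 : pmul ((-(i+1):ℤ),0,0) (-i,0,0) = (-(i+1),0,0) := by
    simp [pmul, Prod.ext_iff] <;> omega
  have h1 : Phi inv x (-(i+1),0,0) = Phi inv x (-(i+1),0,0) * Phi inv x (-i,0,0) := by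
    conv_lhs => rw [← c1]
    exact Pmul inv hinv huniq x _ hFi _ hFi1
  have c2 : pmul ((-(i+1):ℤ),0,0) (-j,0,0) = (-j,0,0) := by
    simp [pmul, Prod.ext_iff] <;> omega
  have h2 : Phi inv x (-j,0,0) = Phi inv x (-(i+1),0,0) * Phi inv x (-j,0,0) := by
    conv_lhs => rw [← c2]
    exact Pmul inv hinv huniq x _ hFj _ hFi1
  show Phi inv x (-i,0,0) = Phi inv x (-(i+1),0,0)
  rw [h, h2, ← h, ← h1]

lemma eup (x : S) {A B A2 B2 : ℤ} (hF : InF (A,B,0)) (hF2 : InF (A2,B2,0))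
    (h : Phi inv x (A,B,0) = Phi inv x (A2,B2,0)) (hBB : B < B2) (hAA : A2 ≤ A) :
    ∃ i, 1 ≤ i ∧ ec inv x i := by
  rw [InF_mk] at hF hF2
  by_cases hA2 : A2 = 0
  · have hA0 : A = 0 := by omega
    subst hA0; subst hA2
    exact ⟨B, by omega, emono inv hinv huniq x (by omega) hBB h⟩
  · set t := -A2 with ht
    have ht1 : 1 ≤ t := by omega
    have key : ∀ Aa Bb : ℤ, InF (Aa,Bb,0) → A2 ≤ Aa →
        Phi inv x (0, t+Bb, 0)
          = Phi inv x (0,t,t) * Phi inv x (Aa,Bb,0) * Phi inv x (-t,0,-t) := by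
      intro Aa Bb hFF hle
      have hFF' := hFF
      rw [InF_mk] at hFF'
      have c1 : pmul ((0:ℤ),t,t) (Aa,Bb,0) = (0, t+Bb, t) := by
        simp [pmul, Prod.ext_iff] <;> omega
      have h1 : Phi inv x (0,t+Bb,t) = Phi inv x (0,t,t) * Phi inv x (Aa,Bb,0) := by
        rw [← c1]; exact Pmul inv hinv huniq x _ hFF _ (by rw [InF_mk]; omega)
      have c2 : pmul ((0:ℤ),t+Bb,t) (-t,0,-t) = (0, t+Bb, 0) := by
        simp [pmul, Prod.ext_iff] <;> omega
      have h2 : Phi inv x (0,t+Bb,0) = Phi inv x (0,t+Bb,t) * Phi inv x (-t,0,-t) := by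
        rw [← c2]; exact Pmul inv hinv huniq x _ (by rw [InF_mk]; omega) _ (by rw [InF_mk]; omega)
      rw [h2, h1]
    have k1 := key A B (by rw [InF_mk]; omega) hAA
    have k2 := key A2 B2 (by rw [InF_mk]; omega) le_rfl
    have : Phi inv x (0, t+B, 0) = Phi inv x (0, t+B2, 0) := by rw [k1, k2, h]
    exact ⟨t+B, by omega, emono inv hinv huniq x (by omega) (by omega) this⟩

lemma fup (x : S) {A B A2 B2 : ℤ} (hF : InF (A,B,0)) (hF2 : InF (A2,B2,0))
    (h : Phi inv x (A,B,0) = Phi inv x (A2,B2,0)) (hAA : A2 < A) (hBB : B ≤ B2) :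
    ∃ j, 1 ≤ j ∧ fc inv x j := by
  rw [InF_mk] at hF hF2
  by_cases hB2 : B2 = 0
  · have hB0 : B = 0 := by omega
    subst hB0; subst hB2
    have h' : Phi inv x (-(-A),0,0) = Phi inv x (-(-A2),0,0) := by
      simpa using h
    exact ⟨-A, by omega, fmono inv hinv huniq x (by omega) (by omega) h'⟩
  · set s := B2 with hs
    have hs1 : 1 ≤ s := by omega
    have key : ∀ Aa Bb : ℤ, InF (Aa,Bb,0) → Bb ≤ s →
        Phi inv x (Aa-s, 0, 0)
          = Phi inv x (-s,0,-s) * Phi inv x (Aa,Bb,0) * Phi inv x (0,s,s) := by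
      intro Aa Bb hFF hle
      have hFF' := hFF
      rw [InF_mk] at hFF'
      have c1 : pmul ((-s:ℤ),0,-s) (Aa,Bb,0) = (Aa-s, 0, -s) := by
        simp [pmul, Prod.ext_iff] <;> omega
      have h1 : Phi inv x (Aa-s,0,-s) = Phi inv x (-s,0,-s) * Phi inv x (Aa,Bb,0) := by
        rw [← c1]; exact Pmul inv hinv huniq x _ hFF _ (by rw [InF_mk]; omega)
      have c2 : pmul ((Aa-s:ℤ),0,-s) (0,s,s) = (Aa-s, 0, 0) := by
        simp [pmul, Prod.ext_iff] <;> omega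
      have h2 : Phi inv x (Aa-s,0,0) = Phi inv x (Aa-s,0,-s) * Phi inv x (0,s,s) := by
        rw [← c2]; exact Pmul inv hinv huniq x _ (by rw [InF_mk]; omega) _ (by rw [InF_mk]; omega)
      rw [h2, h1]
    have k1 := key A B (by rw [InF_mk]; omega) (by omega)
    have k2 := key A2 B2 (by rw [InF_mk]; omega) le_rfl
    have hq : Phi inv x (A-s, 0, 0) = Phi inv x (A2-s, 0, 0) := by rw [k1, k2, h]
    have hq' : Phi inv x (-(s-A),0,0) = Phi inv x (-(s-A2),0,0) := by
      have e1 : (-(s-A) : ℤ) = A-s := by ring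
      have e2 : (-(s-A2) : ℤ) = A2-s := by ring
      rw [e1, e2]; exact hq
    exact ⟨s-A, by omega, fmono inv hinv huniq x (by omega) (by omega) hq'⟩

lemma comb_eq (x : S) {A B A' B' : ℤ} (hF : InF (A,B,0)) (hF' : InF (A',B',0))
    (h : Phi inv x (A,B,0) = Phi inv x (A',B',0)) :
    Phi inv x (min A A', max B B', 0) = Phi inv x (A,B,0) := by
  have hF1 := hF; have hF2 := hF'
  rw [InF_mk] at hF1 hF2
  have c1 : pmul (A,B,(0:ℤ)) (A',B',0) = (min A A', max B B', 0) := by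
    simp [pmul, Prod.ext_iff] <;> omega
  have c2 : pmul (A,B,(0:ℤ)) (A,B,0) = (A, B, 0) := by
    simp [pmul, Prod.ext_iff] <;> omega
  calc Phi inv x (min A A', max B B', 0)
      = Phi inv x (A,B,0) * Phi inv x (A',B',0) := by
        rw [← c1]; exact Pmul inv hinv huniq x _ hF' _ hF
    _ = Phi inv x (A,B,0) * Phi inv x (A,B,0) := by rw [← h]
    _ = Phi inv x (A,B,0) := by
        rw [← Pmul inv hinv huniq x _ hF _ hF, c2]

lemma ecol_of (x : S) {A B A' B' : ℤ} (hF : InF (A,B,0)) (hF' : InF (A',B',0))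
    (h : Phi inv x (A,B,0) = Phi inv x (A',B',0)) (hne : B ≠ B') :
    ∃ i, 1 ≤ i ∧ ec inv x i := by
  have hcomb := comb_eq inv hinv huniq x hF hF' h
  have hcomb' := (comb_eq inv hinv huniq x hF hF' h).trans h
  have hFc : InF (min A A', max B B', 0) := by
    rw [InF_mk] at hF hF' ⊢; omega
  rcases hne.lt_or_gt with hlt | hlt
  · exact eup inv hinv huniq x hF hFc hcomb.symm (by omega) (by omega)
  · exact eup inv hinv huniq x hF' hFc hcomb'.symm (by omega) (by omega)

lemma fcol_of (x : S) {A B A' B' : ℤ} (hF : InF (A,B,0)) (hF' : InF (A',B',0))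
    (h : Phi inv x (A,B,0) = Phi inv x (A',B',0)) (hne : A ≠ A') :
    ∃ j, 1 ≤ j ∧ fc inv x j := by
  have hcomb := comb_eq inv hinv huniq x hF hF' h
  have hcomb' := (comb_eq inv hinv huniq x hF hF' h).trans h
  have hFc : InF (min A A', max B B', 0) := by
    rw [InF_mk] at hF hF' ⊢; omega
  rcases hne.lt_or_gt with hlt | hlt
  · exact fup inv hinv huniq x hF' hFc hcomb'.symm (by omega) (by omega)
  · exact fup inv hinv huniq x hF hFc hcomb.symm (by omega) (by omega)

lemma idem_pair_l (x : S) {a b c : ℤ} (hp : InF (a,b,c)) :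
    Phi inv x (a, b, 0) = Phi inv x (a,b,c) * Phi inv x (pinv (a,b,c)) := by
  have hp' := hp; rw [InF_mk] at hp'
  have cc : pmul (a,b,c) (pinv (a,b,c)) = (a, b, 0) := by
    simp [pmul, pinv, Prod.ext_iff] <;> omega
  rw [← cc]
  exact Pmul inv hinv huniq x _ (InF_pinv hp) _ hp

lemma idem_pair_r (x : S) {a b c : ℤ} (hp : InF (a,b,c)) :
    Phi inv x (a - c, b - c, 0) = Phi inv x (pinv (a,b,c)) * Phi inv x (a,b,c) := by
  have hp' := hp; rw [InF_mk] at hp'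
  have cc : pmul (pinv (a,b,c)) (a,b,c) = (a - c, b - c, 0) := by
    simp [pmul, pinv, Prod.ext_iff] <;> omega
  rw [← cc]
  exact Pmul inv hinv huniq x _ hp _ (InF_pinv hp)

lemma collapse_of_ne (x : S) {p q : ℤ × ℤ × ℤ} (hp : InF p) (hq : InF q)
    (hne : p ≠ q) (h : Phi inv x p = Phi inv x q) :
    (∃ i, 1 ≤ i ∧ ec inv x i) ∨ (∃ j, 1 ≤ j ∧ fc inv x j) := by
  obtain ⟨a,b,c⟩ := p
  obtain ⟨a',b',c'⟩ := q
  have hicong := Phi_pinv_cong inv hinv huniq x hp hq h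
  have h1 : Phi inv x (a, b, 0) = Phi inv x (a', b', 0) := by
    rw [idem_pair_l inv hinv huniq x hp, idem_pair_l inv hinv huniq x hq, h, hicong]
  have h2 : Phi inv x (a - c, b - c, 0) = Phi inv x (a' - c', b' - c', 0) := by
    rw [idem_pair_r inv hinv huniq x hp, idem_pair_r inv hinv huniq x hq, h, hicong]
  have hpF := hp; have hqF := hq
  rw [InF_mk] at hpF hqF
  have hFl : InF (a, b, (0:ℤ)) := by rw [InF_mk]; omega
  have hFl' : InF (a', b', (0:ℤ)) := by rw [InF_mk]; omega
  have hFr : InF (a - c, b - c, (0:ℤ)) := by rw [InF_mk]; omega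
  have hFr' : InF (a' - c', b' - c', (0:ℤ)) := by rw [InF_mk]; omega
  by_cases hA : a = a'
  · by_cases hB : b = b'
    · have hc : c ≠ c' := by
        intro hcc
        exact hne (by simp [Prod.ext_iff, hA, hB, hcc])
      right
      exact fcol_of inv hinv huniq x hFr hFr' h2 (by omega)
    · left
      exact ecol_of inv hinv huniq x hFl hFl' h1 hB
  · right
    exact fcol_of inv hinv huniq x hFl hFl' h1 hA


lemma Esand (x : S) (k : ℤ) (hk : 1 ≤ k) (hec : ec inv x k) {A B c : ℤ}
    (hF : InF (A,B,c)) (hB : k ≤ B) :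
    Phi inv x (A,B,c) = Phi inv x ((0:ℤ),k,0) * Phi inv x (A, max (max c 0) (A+1), c) := by
  have hF' := hF; rw [InF_mk] at hF'
  set b0 := max (max c 0) (A+1) with hb0
  have c1 : pmul ((0:ℤ),B,0) (A,b0,c) = (A,B,c) := by
    simp [pmul, Prod.ext_iff] <;> omega
  calc Phi inv x (A,B,c) = Phi inv x ((0:ℤ),B,0) * Phi inv x (A,b0,c) := by
        rw [← c1]
        exact Pmul inv hinv huniq x _ (by rw [InF_mk]; omega) _ (by rw [InF_mk]; omega)
    _ = Phi inv x ((0:ℤ),k,0) * Phi inv x (A,b0,c) := by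
        rw [E0 inv hinv huniq x k hk hec B (by omega)]

lemma Einv (x : S) (k : ℤ) (hk : 1 ≤ k) (hec : ec inv x k) {A B B' c : ℤ}
    (hF : InF (A,B,c)) (hF' : InF (A,B',c)) (hB : k ≤ B) (hB' : k ≤ B') :
    Phi inv x (A,B,c) = Phi inv x (A,B',c) :=
  (Esand inv hinv huniq x k hk hec hF hB).trans
    (Esand inv hinv huniq x k hk hec hF' hB').symm

lemma EL1 (x : S) (k : ℤ) (hk : 1 ≤ k) (hec : ec inv x k) {j B : ℤ}
    (hj : k ≤ j) (hB : 0 ≤ B) :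
    Phi inv x (-j, B, 0) = Phi inv x (-j, 0, 0) := by
  have key : ∀ Bb : ℤ, 0 ≤ Bb →
      Phi inv x (-j,Bb,0)
        = Phi inv x (-j,0,-j) * Phi inv x ((0:ℤ),k,0) * Phi inv x ((0:ℤ),j,j) := by
    intro Bb hBb
    have c1 : pmul ((-j:ℤ),0,-j) (0,j+Bb,0) = (-j, Bb, -j) := by
      simp [pmul, Prod.ext_iff] <;> omega
    have h1 : Phi inv x (-j,Bb,-j) = Phi inv x (-j,0,-j) * Phi inv x ((0:ℤ),j+Bb,0) := by
      rw [← c1]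
      exact Pmul inv hinv huniq x _ (by rw [InF_mk]; omega) _ (by rw [InF_mk]; omega)
    have c2 : pmul ((-j:ℤ),Bb,-j) (0,j,j) = (-j,Bb,0) := by
      simp [pmul, Prod.ext_iff] <;> omega
    have h2 : Phi inv x (-j,Bb,0) = Phi inv x (-j,Bb,-j) * Phi inv x ((0:ℤ),j,j) := by
      rw [← c2]
      exact Pmul inv hinv huniq x _ (by rw [InF_mk]; omega) _ (by rw [InF_mk]; omega)
    rw [h2, h1, E0 inv hinv huniq x k hk hec (j+Bb) (by omega)]
  exact (key B hB).trans (key 0 le_rfl).symm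

lemma EinvLow (x : S) (k : ℤ) (hk : 1 ≤ k) (hec : ec inv x k) {A B B' c : ℤ}
    (hF : InF (A,B,c)) (hF' : InF (A,B',c)) (hA : A ≤ -k) :
    Phi inv x (A,B,c) = Phi inv x (A,B',c) := by
  have base : ∀ Bb : ℤ, InF (A,Bb,c) → Phi inv x (A,Bb,0) = Phi inv x (A,0,0) := by
    intro Bb hFF
    rw [InF_mk] at hFF
    have h := EL1 inv hinv huniq x k hk hec (j := -A) (by omega) (B := Bb) (by omega)
    rwa [neg_neg] at h
  rcases lt_trichotomy c 0 with hc | hc | hc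
  · have tail : ∀ Bb : ℤ, InF (A,Bb,c) →
        Phi inv x (A,Bb,c) = Phi inv x (A,Bb,0) * Phi inv x (c,0,c) := by
      intro Bb hFF
      rw [InF_mk] at hFF
      have c1 : pmul (A,Bb,(0:ℤ)) (c,0,c) = (A,Bb,c) := by
        simp [pmul, Prod.ext_iff] <;> omega
      rw [← c1]
      exact Pmul inv hinv huniq x _ (by rw [InF_mk]; omega) _ (by rw [InF_mk]; omega)
    rw [tail B hF, tail B' hF', base B hF, base B' hF']
  · subst hc
    rw [base B hF, base B' hF']
  · have tail : ∀ Bb : ℤ, InF (A,Bb,c) →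
        Phi inv x (A,Bb,c) = Phi inv x (A,Bb,0) * Phi inv x ((0:ℤ),c,c) := by
      intro Bb hFF
      rw [InF_mk] at hFF
      have c1 : pmul (A,Bb,(0:ℤ)) (0,c,c) = (A,Bb,c) := by
        simp [pmul, Prod.ext_iff] <;> omega
      rw [← c1]
      exact Pmul inv hinv huniq x _ (by rw [InF_mk]; omega) _ (by rw [InF_mk]; omega)
    rw [tail B hF, tail B' hF', base B hF, base B' hF']

lemma FL (x : S) (l : ℤ) (hl : 1 ≤ l) (hfc : fc inv x l) {A A' B c : ℤ}
    (hF : InF (A,B,c)) (hF' : InF (A',B,c)) (hA : A ≤ -l) (hA' : A' ≤ -l)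
    (hB : 1 ≤ B) : Phi inv x (A,B,c) = Phi inv x (A',B,c) := by
  have key : ∀ Aa : ℤ, InF (Aa,B,c) → Aa ≤ -l →
      Phi inv x (Aa,B,c) = Phi inv x (-l,0,0) * Phi inv x (min 0 c, B, c) := by
    intro Aa hFF hAa
    rw [InF_mk] at hFF
    have c1 : pmul (Aa,(0:ℤ),0) (min 0 c, B, c) = (Aa,B,c) := by
      simp [pmul, Prod.ext_iff] <;> omega
    have h1 : Phi inv x (Aa,B,c) = Phi inv x (Aa,0,0) * Phi inv x (min 0 c,B,c) := by
      rw [← c1]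
      exact Pmul inv hinv huniq x _ (by rw [InF_mk]; omega) _ (by rw [InF_mk]; omega)
    have h2 := F0 inv hinv huniq x l hl hfc (-Aa) (by omega)
    rw [neg_neg] at h2
    rw [h1, h2]
  exact (key A hF hA).trans (key A' hF' hA').symm

lemma Phi_pow (x : S) (j : ℤ) :
    Phi inv x (0,j,j) = (x : WithOne S)^(j.toNat) := by
  show (x : WithOne S)^(j.toNat) * ((inv x : S) : WithOne S)^((j-0).toNat)
    * (x : WithOne S)^((j-0).toNat) = _
  rw [show (j - 0 : ℤ) = j from by ring]
  exact M1 inv hinv huniq x j.toNat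

omit hinv huniq in
lemma powper (x : S) {n1 n2 : ℕ}
    (h : (x : WithOne S)^(n1+1) = (x : WithOne S)^(n2+1)) (hne : n1 ≠ n2) :
    ∃ r s : ℕ, 1 ≤ r ∧ 1 ≤ s ∧ sgpow x r = sgpow x (r+s) := by
  rcases hne.lt_or_gt with hlt | hlt
  · refine ⟨n1+1, n2-n1, by omega, by omega, ?_⟩
    rw [show n1+1+(n2-n1) = n2+1 from by omega]
    apply WithOne.coe_inj.mp
    rw [coe_sgpow, coe_sgpow]
    exact h
  · refine ⟨n2+1, n1-n2, by omega, by omega, ?_⟩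
    rw [show n2+1+(n1-n2) = n1+1 from by omega]
    apply WithOne.coe_inj.mp
    rw [coe_sgpow, coe_sgpow]
    exact h.symm

lemma MAIN_Z (x : S) (k l : ℤ) (hk : 1 ≤ k) (hl : 1 ≤ l)
    (hec : ec inv x k) (hfc : fc inv x l) :
    (∃ r s : ℕ, 1 ≤ r ∧ 1 ≤ s ∧ sgpow x r = sgpow x (r+s)) ∨
    (∃ T : Subsemigroup S, Nonempty (↥T ≃* Multiplicative ℤ)) := by
  set K := max k l with hK
  have hK1 : 1 ≤ K := by omega
  have hFz : ∀ c : ℤ, InF (-K + min 0 c, K + max 0 c, c) := by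
    intro c; rw [InF_mk]; omega
  have hmulz : ∀ c c' : ℤ,
      Phi inv x (-K + min 0 (c+c'), K + max 0 (c+c'), c+c')
        = Phi inv x (-K + min 0 c, K + max 0 c, c)
          * Phi inv x (-K + min 0 c', K + max 0 c', c') := by
    intro c c'
    have hP := Pmul inv hinv huniq x _ (hFz c') _ (hFz c)
    have c1 : pmul (-K + min 0 c, K + max 0 c, c) (-K + min 0 c', K + max 0 c', c')
        = (-K + min (min 0 c) (c + min 0 c'), K + max (max 0 c) (c + max 0 c'), c+c') := by
      simp [pmul, Prod.ext_iff] <;> omega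
    rw [c1] at hP
    rw [← hP]
    have hFP : InF (-K + min (min 0 c) (c + min 0 c'), K + max (max 0 c) (c + max 0 c'), c+c') := by
      rw [InF_mk]; omega
    have e1 : Phi inv x (-K + min (min 0 c) (c + min 0 c'), K + max (max 0 c) (c + max 0 c'), c+c')
        = Phi inv x (-K + min (min 0 c) (c + min 0 c'), K + max 0 (c+c'), c+c') := by
      apply Einv inv hinv huniq x k hk hec hFP (by rw [InF_mk]; omega) (by omega) (by omega)
    have e2 : Phi inv x (-K + min (min 0 c) (c + min 0 c'), K + max 0 (c+c'), c+c')
        = Phi inv x (-K + min 0 (c+c'), K + max 0 (c+c'), c+c') := by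
      apply FL inv hinv huniq x l hl hfc (by rw [InF_mk]; omega) (by rw [InF_mk]; omega)
        (by omega) (by omega) (by omega)
    rw [e1, e2]
  by_cases hper : ∃ c c' : ℤ, c ≠ c' ∧
      Phi inv x (-K + min 0 c, K + max 0 c, c) = Phi inv x (-K + min 0 c', K + max 0 c', c')
  · left
    obtain ⟨c, c', hne, heq⟩ := hper
    set t := K + max 0 (-c) + max 0 (-c') with hT
    have key : ∀ cc : ℤ, max 0 (-cc) ≤ t - K →
        Phi inv x ((0:ℤ),t,t) * Phi inv x (-K + min 0 cc, K + max 0 cc, cc)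
          = (x : WithOne S)^((t+cc).toNat) := by
      intro cc hcc
      have c1 : pmul ((0:ℤ),t,t) (-K + min 0 cc, K + max 0 cc, cc)
          = (0, t + K + max 0 cc, t + cc) := by
        simp [pmul, Prod.ext_iff] <;> omega
      have h1 := Pmul inv hinv huniq x _ (hFz cc) ((0:ℤ),t,t) (by rw [InF_mk]; omega)
      rw [c1] at h1
      rw [← h1]
      have e1 : Phi inv x ((0:ℤ), t + K + max 0 cc, t + cc)
          = Phi inv x ((0:ℤ), t + cc, t + cc) := by
        apply Einv inv hinv huniq x k hk hec (by rw [InF_mk]; omega) (by rw [InF_mk]; omega)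
          (by omega) (by omega)
      rw [e1, Phi_pow inv hinv huniq x]
    have k1 := key c (by omega)
    have k2 := key c' (by omega)
    have hpow : (x : WithOne S)^((t+c).toNat) = (x : WithOne S)^((t+c').toNat) := by
      rw [← k1, ← k2, heq]
    obtain ⟨n1, hn1⟩ : ∃ n1 : ℕ, (t+c).toNat = n1 + 1 := ⟨(t+c-1).toNat, by omega⟩
    obtain ⟨n2, hn2⟩ : ∃ n2 : ℕ, (t+c').toNat = n2 + 1 := ⟨(t+c'-1).toNat, by omega⟩
    rw [hn1, hn2] at hpow
    exact powper x hpow (by omega)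
  · right
    push_neg at hper
    have hch : ∀ c : ℤ, ∃ s : S, Phi inv x (-K + min 0 c, K + max 0 c, c) = (s : WithOne S) :=
      fun c => Phi_coe inv x _ (hFz c)
    choose F hFc using hch
    have hFm : ∀ c c' : ℤ, F (c+c') = F c * F c' := by
      intro c c'
      apply WithOne.coe_inj.mp
      rw [← hFc, hmulz, hFc, hFc, WithOne.coe_mul]
    have hFinj : Function.Injective F := by
      intro c c' hcc
      by_contra hne
      exact hper c c' hne (by rw [hFc, hFc, hcc])
    have hmm : ∀ {a b : S}, a ∈ Set.range F → b ∈ Set.range F → a * b ∈ Set.range F := by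
      rintro a b ⟨ca, rfl⟩ ⟨cb, rfl⟩
      exact ⟨ca+cb, hFm ca cb⟩
    set T : Subsemigroup S := ⟨Set.range F, hmm⟩ with hT
    refine ⟨T, ?_⟩
    have hfmem : ∀ g : Multiplicative ℤ, F (Multiplicative.toAdd g) ∈ T :=
      fun g => ⟨_, rfl⟩
    set tf : Multiplicative ℤ → T := fun g => ⟨F (Multiplicative.toAdd g), hfmem g⟩ with htf
    have hinj : Function.Injective tf := by
      intro g h hgh
      have hv := congrArg Subtype.val hgh
      exact Multiplicative.toAdd.injective (hFinj hv)
    have hsurj : Function.Surjective tf := by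
      rintro ⟨s, ⟨c, rfl⟩⟩
      exact ⟨Multiplicative.ofAdd c, Subtype.ext rfl⟩
    have hm : ∀ g h : Multiplicative ℤ, tf (g*h) = tf g * tf h := by
      intro g h
      exact Subtype.ext (hFm _ _)
    exact ⟨(MulEquiv.mk (Equiv.ofBijective tf ⟨hinj, hsurj⟩) hm).symm⟩


def gB (k : ℤ) (m n : ℕ) : ℤ × ℤ × ℤ :=
  (k * (-(m:ℤ)), k * max (1-(m:ℤ)) (max 0 ((n:ℤ)-(m:ℤ))), k * ((n:ℤ)-(m:ℤ)))

omit hinv huniq in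
lemma kmin (k : ℤ) (hk : 0 ≤ k) (a b : ℤ) : k * min a b = min (k*a) (k*b) := by
  rcases le_total a b with h | h
  · rw [min_eq_left h, min_eq_left (mul_le_mul_of_nonneg_left h hk)]
  · rw [min_eq_right h, min_eq_right (mul_le_mul_of_nonneg_left h hk)]

omit hinv huniq in
lemma kmax (k : ℤ) (hk : 0 ≤ k) (a b : ℤ) : k * max a b = max (k*a) (k*b) := by
  rcases le_total a b with h | h
  · rw [max_eq_right h, max_eq_right (mul_le_mul_of_nonneg_left h hk)]
  · rw [max_eq_left h, max_eq_left (mul_le_mul_of_nonneg_left h hk)]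

omit hinv huniq in
lemma kle (k : ℤ) (hk : 1 ≤ k) {a b : ℤ} : k * a ≤ k * b ↔ a ≤ b := by
  constructor
  · intro h
    exact le_of_mul_le_mul_left h (by omega)
  · intro h
    exact mul_le_mul_of_nonneg_left h (by omega)

omit hinv huniq in
lemma klt (k : ℤ) (hk : 1 ≤ k) {a b : ℤ} : k * a < k * b ↔ a < b := by
  rw [← not_le, ← not_le, kle k hk]

omit hinv huniq in
lemma gB_InF (k : ℤ) (hk : 1 ≤ k) (m n : ℕ) : InF (gB k m n) := by
  simp only [gB]
  rw [InF_mk]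
  refine ⟨?_, ?_, ?_, ?_, ?_⟩
  · have h := (kle k hk).mpr (show -((m:ℤ)) ≤ 0 by omega)
    rwa [mul_zero] at h
  · have h := (kle k hk).mpr (show (0:ℤ) ≤ max (1-(m:ℤ)) (max 0 ((n:ℤ)-(m:ℤ))) by omega)
    rwa [mul_zero] at h
  · exact (klt k hk).mpr (by omega)
  · exact (kle k hk).mpr (by omega)
  · exact (kle k hk).mpr (by omega)

omit hinv huniq in
lemma gB_pmul (k : ℤ) (hk : 1 ≤ k) (m n p q : ℕ) :
    pmul (gB k m n) (gB k p q)
      = (k * (-(((m + (p - n) : ℕ)) : ℤ)),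
         k * max (max (1-(m:ℤ)) (max 0 ((n:ℤ)-(m:ℤ))))
             (((n:ℤ)-(m:ℤ)) + max (1-(p:ℤ)) (max 0 ((q:ℤ)-(p:ℤ)))),
         k * ((((q + (n - p) : ℕ)) : ℤ) - (((m + (p - n) : ℕ)) : ℤ))) := by
  simp only [gB, pmul_eq, Prod.mk.injEq]
  refine ⟨?_, ?_, ?_⟩
  · rw [show k * ((n:ℤ)-(m:ℤ)) + k * (-(p:ℤ)) = k * ((n:ℤ)-(m:ℤ)-(p:ℤ)) from by ring,
      ← kmin k (by omega)]
    congr 1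
    push_cast
    omega
  · rw [show k * ((n:ℤ)-(m:ℤ)) + k * max (1-(p:ℤ)) (max 0 ((q:ℤ)-(p:ℤ)))
        = k * (((n:ℤ)-(m:ℤ)) + max (1-(p:ℤ)) (max 0 ((q:ℤ)-(p:ℤ)))) from by ring,
      ← kmax k (by omega)]
  · rw [show k * ((n:ℤ)-(m:ℤ)) + k * ((q:ℤ)-(p:ℤ))
        = k * (((n:ℤ)-(m:ℤ)) + ((q:ℤ)-(p:ℤ))) from by ring]
    congr 1
    push_cast
    omega

lemma gB_mul (x : S) (k : ℤ) (hk : 1 ≤ k) (hec : ec inv x k) (m n p q : ℕ) :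
    Phi inv x (gB k (m + (p - n)) (q + (n - p)))
      = Phi inv x (gB k m n) * Phi inv x (gB k p q) := by
  have hP := Pmul inv hinv huniq x _ (gB_InF k hk p q) _ (gB_InF k hk m n)
  rw [gB_pmul k hk m n p q] at hP
  rw [← hP]
  have hFX : InF (k * (-(((m + (p - n) : ℕ)) : ℤ)),
      k * max (max (1-(m:ℤ)) (max 0 ((n:ℤ)-(m:ℤ))))
          (((n:ℤ)-(m:ℤ)) + max (1-(p:ℤ)) (max 0 ((q:ℤ)-(p:ℤ)))),
      k * ((((q + (n - p) : ℕ)) : ℤ) - (((m + (p - n) : ℕ)) : ℤ))) := by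
    have h := InF_pmul (gB_InF k hk m n) (gB_InF k hk p q)
    rwa [gB_pmul k hk m n p q] at h
  have hFY := gB_InF k hk (m + (p - n)) (q + (n - p))
  simp only [gB] at hFY ⊢
  by_cases hm' : m + (p - n) = 0
  · apply Einv inv hinv huniq x k hk hec hFY hFX
    · have h := (kle k hk).mpr
        (show (1:ℤ) ≤ max (1-((m + (p - n) : ℕ):ℤ))
          (max 0 (((q + (n - p) : ℕ):ℤ)-((m + (p - n) : ℕ):ℤ))) by push_cast; omega)
      rwa [mul_one] at h
    · have h := (kle k hk).mpr
        (show (1:ℤ) ≤ max (max (1-(m:ℤ)) (max 0 ((n:ℤ)-(m:ℤ))))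
          (((n:ℤ)-(m:ℤ)) + max (1-(p:ℤ)) (max 0 ((q:ℤ)-(p:ℤ)))) by push_cast; omega)
      rwa [mul_one] at h
  · apply EinvLow inv hinv huniq x k hk hec hFY hFX
    have h := (kle k hk).mpr (show -(((m + (p - n) : ℕ)):ℤ) ≤ -1 by push_cast; omega)
    rwa [mul_neg_one] at h

lemma gB_inj (x : S) (k : ℤ) (hk : 1 ≤ k) (hnf : ∀ j : ℤ, 1 ≤ j → ¬ fc inv x j)
    {m n p q : ℕ} (h : Phi inv x (gB k m n) = Phi inv x (gB k p q)) :
    m = p ∧ n = q := by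
  have hkne : (k:ℤ) ≠ 0 := by omega
  have hgF := gB_InF k hk m n
  have hgF' := gB_InF k hk p q
  simp only [gB] at hgF hgF' h
  have hicong := Phi_pinv_cong inv hinv huniq x hgF hgF' h
  have hgFmk := hgF; have hgFmk' := hgF'
  rw [InF_mk] at hgFmk hgFmk'
  have h1 : Phi inv x (k * (-(m:ℤ)), k * max (1-(m:ℤ)) (max 0 ((n:ℤ)-(m:ℤ))), 0)
      = Phi inv x (k * (-(p:ℤ)), k * max (1-(p:ℤ)) (max 0 ((q:ℤ)-(p:ℤ))), 0) := by
    rw [idem_pair_l inv hinv huniq x hgF, idem_pair_l inv hinv huniq x hgF', h, hicong]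
  have h2 : Phi inv x (k * (-(m:ℤ)) - k * ((n:ℤ)-(m:ℤ)),
        k * max (1-(m:ℤ)) (max 0 ((n:ℤ)-(m:ℤ))) - k * ((n:ℤ)-(m:ℤ)), 0)
      = Phi inv x (k * (-(p:ℤ)) - k * ((q:ℤ)-(p:ℤ)),
        k * max (1-(p:ℤ)) (max 0 ((q:ℤ)-(p:ℤ))) - k * ((q:ℤ)-(p:ℤ)), 0) := by
    rw [idem_pair_r inv hinv huniq x hgF, idem_pair_r inv hinv huniq x hgF', h, hicong]
  have hm : m = p := by
    by_contra hmp
    have hA : k * (-(m:ℤ)) ≠ k * (-(p:ℤ)) := by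
      intro hEq
      have := mul_left_cancel₀ hkne hEq
      apply hmp
      omega
    obtain ⟨j, hj1, hjc⟩ := fcol_of inv hinv huniq x
      (by rw [InF_mk]; omega) (by rw [InF_mk]; omega) h1 hA
    exact hnf j hj1 hjc
  refine ⟨hm, ?_⟩
  by_contra hnq
  have hA2 : k * (-(m:ℤ)) - k * ((n:ℤ)-(m:ℤ)) ≠ k * (-(p:ℤ)) - k * ((q:ℤ)-(p:ℤ)) := by
    intro hEq
    rw [show k * (-(m:ℤ)) - k * ((n:ℤ)-(m:ℤ)) = k * (-(n:ℤ)) from by ring,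
      show k * (-(p:ℤ)) - k * ((q:ℤ)-(p:ℤ)) = k * (-(q:ℤ)) from by ring] at hEq
    have := mul_left_cancel₀ hkne hEq
    apply hnq
    omega
  obtain ⟨j, hj1, hjc⟩ := fcol_of inv hinv huniq x
    (by rw [InF_mk]; omega) (by rw [InF_mk]; omega) h2 hA2
  exact hnf j hj1 hjc

lemma MAIN_BIC (x : S) (k : ℤ) (hk : 1 ≤ k) (hec : ec inv x k)
    (hnf : ∀ j : ℤ, 1 ≤ j → ¬ fc inv x j) :
    ∃ T : Subsemigroup S, Nonempty (↥T ≃* Bicyclic) := by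
  have hch : ∀ mn : ℕ × ℕ, ∃ s : S, Phi inv x (gB k mn.1 mn.2) = (s : WithOne S) :=
    fun mn => Phi_coe inv x _ (gB_InF k hk mn.1 mn.2)
  choose psi hpsi using hch
  have hpm : ∀ a b : ℕ × ℕ, psi (bmul a b) = psi a * psi b := by
    intro a b
    apply WithOne.coe_inj.mp
    rw [WithOne.coe_mul, ← hpsi, ← hpsi, ← hpsi]
    obtain ⟨m, n⟩ := a
    obtain ⟨p, q⟩ := b
    show Phi inv x (gB k (bmul (m,n) (p,q)).1 (bmul (m,n) (p,q)).2) = _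
    simp only [bmul]
    exact gB_mul inv hinv huniq x k hk hec m n p q
  have hpinj : Function.Injective psi := by
    intro a b hab
    have : Phi inv x (gB k a.1 a.2) = Phi inv x (gB k b.1 b.2) := by
      rw [hpsi, hpsi, hab]
    obtain ⟨h1, h2⟩ := gB_inj inv hinv huniq x k hk hnf this
    exact Prod.ext h1 h2
  have hmm : ∀ {a b : S}, a ∈ Set.range psi → b ∈ Set.range psi → a * b ∈ Set.range psi := by
    rintro a b ⟨ca, rfl⟩ ⟨cb, rfl⟩
    exact ⟨bmul ca cb, hpm ca cb⟩
  set T : Subsemigroup S := ⟨Set.range psi, hmm⟩ with hT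
  refine ⟨T, ?_⟩
  have hfmem : ∀ g : Bicyclic, psi g ∈ T := fun g => ⟨g, rfl⟩
  set tf : Bicyclic → T := fun g => ⟨psi g, hfmem g⟩ with htf
  have hinj : Function.Injective tf := by
    intro g h hgh
    exact hpinj (congrArg Subtype.val hgh)
  have hsurj : Function.Surjective tf := by
    rintro ⟨s, ⟨g, rfl⟩⟩
    exact ⟨g, Subtype.ext rfl⟩
  have hm : ∀ g h : Bicyclic, tf (g * h) = tf g * tf h := by
    intro g h
    exact Subtype.ext (hpm g h)
  exact ⟨(MulEquiv.mk (Equiv.ofBijective tf ⟨hinj, hsurj⟩) hm).symm⟩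


lemma swap_ef (x : S) (j : ℤ) :
    Phi inv (inv x) (0,j,0) = Phi inv x (-j,0,0) := by
  show ((inv x : S) : WithOne S)^(j.toNat)
      * ((inv (inv x) : S) : WithOne S)^((j-0).toNat)
      * ((inv x : S) : WithOne S)^((0-0:ℤ).toNat)
    = (x : WithOne S)^((0:ℤ).toNat)
      * ((inv x : S) : WithOne S)^((0-(-j)).toNat) * (x : WithOne S)^((0-(-j)).toNat)
  rw [inv_invol inv hinv huniq x]
  simp only [sub_zero, zero_sub, neg_neg, Int.toNat_zero, pow_zero, mul_one, one_mul]

lemma swap_fe (x : S) (j : ℤ) :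
    Phi inv (inv x) (-j,0,0) = Phi inv x (0,j,0) := by
  show ((inv x : S) : WithOne S)^((0:ℤ).toNat)
      * ((inv (inv x) : S) : WithOne S)^((0-(-j)).toNat)
      * ((inv x : S) : WithOne S)^((0-(-j)).toNat)
    = (x : WithOne S)^(j.toNat)
      * ((inv x : S) : WithOne S)^((j-0).toNat) * (x : WithOne S)^((0-0:ℤ).toNat)
  rw [inv_invol inv hinv huniq x]
  simp only [sub_zero, zero_sub, neg_neg, Int.toNat_zero, pow_zero, mul_one, one_mul]

end Mside
end MIS

/-- Every monogenic inverse semigroup `[u]` (here: a semigroup `S` with unique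
inverses, generated as an inverse semigroup by the single element `u`) either has
a periodic generator, or contains a subgroup isomorphic to the infinite cyclic
group `ℤ`, or contains a subsemigroup isomorphic to the bicyclic monoid, or is
isomorphic to the free monogenic inverse semigroup. -/
theorem monogenic_inverse_semigroup_cases (S : Type) [Semigroup S]
    (inv : S → S)
    (hinv : ∀ x : S, x * inv x * x = x ∧ inv x * x * inv x = inv x)
    (huniq : ∀ x y : S, x * y * x = x → y * x * y = y → y = inv x)
    (u : S)
    (hgen : ∀ T : Subsemigroup S, u ∈ T → (∀ x ∈ T, inv x ∈ T) → ∀ x : S, x ∈ T) :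
    (∃ r s : ℕ, 1 ≤ r ∧ 1 ≤ s ∧ sgpow u r = sgpow u (r + s)) ∨
    (∃ T : Subsemigroup S, Nonempty (↥T ≃* Multiplicative ℤ)) ∨
    (∃ T : Subsemigroup S, Nonempty (↥T ≃* Bicyclic)) ∨
    Nonempty (S ≃* PrestonF) := by
  classical
  by_cases hper : ∃ r s : ℕ, 1 ≤ r ∧ 1 ≤ s ∧ sgpow u r = sgpow u (r+s)
  · exact Or.inl hper
  by_cases hE : ∃ kk : ℤ, 1 ≤ kk ∧ MIS.ec inv u kk
  · by_cases hF : ∃ ll : ℤ, 1 ≤ ll ∧ MIS.fc inv u ll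
    · obtain ⟨k, hk, hec⟩ := hE
      obtain ⟨l, hl, hfc⟩ := hF
      rcases MIS.MAIN_Z inv hinv huniq u k l hk hl hec hfc with hp | hZ
      · exact Or.inl hp
      · exact Or.inr (Or.inl hZ)
    · obtain ⟨k, hk, hec⟩ := hE
      push_neg at hF
      refine Or.inr (Or.inr (Or.inl (MIS.MAIN_BIC inv hinv huniq u k hk hec ?_)))
      intro j hj hjc
      exact hF j hj hjc
  · by_cases hF : ∃ ll : ℤ, 1 ≤ ll ∧ MIS.fc inv u ll
    · obtain ⟨l, hl, hfc⟩ := hF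
      push_neg at hE
      refine Or.inr (Or.inr (Or.inl (MIS.MAIN_BIC inv hinv huniq (inv u) l hl ?_ ?_)))
      · show MIS.Phi inv (inv u) (0,l,0) = MIS.Phi inv (inv u) (0,l+1,0)
        rw [MIS.swap_ef inv hinv huniq u l, MIS.swap_ef inv hinv huniq u (l+1)]
        exact hfc
      · intro j hj hjc
        apply hE j hj
        show MIS.Phi inv u (0,j,0) = MIS.Phi inv u (0,j+1,0)
        rw [← MIS.swap_fe inv hinv huniq u j, ← MIS.swap_fe inv hinv huniq u (j+1)]
        exact hjc
    · push_neg at hE hF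
      refine Or.inr (Or.inr (Or.inr ?_))
      have hch : ∀ p : PrestonF, ∃ s : S, MIS.Phi inv u p.1 = (s : WithOne S) :=
        fun p => MIS.Phi_coe inv u p.1 p.2
      choose phi hphi using hch
      have hmul : ∀ p q : PrestonF, phi (p * q) = phi p * phi q := by
        intro p q
        apply WithOne.coe_inj.mp
        rw [WithOne.coe_mul, ← hphi, ← hphi, ← hphi]
        show MIS.Phi inv u (pmul p.1 q.1) = _
        exact MIS.Pmul inv hinv huniq u q.1 q.2 p.1 p.2
      have hinj : Function.Injective phi := by
        intro p q hpq
        have hPhi : MIS.Phi inv u p.1 = MIS.Phi inv u q.1 := by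
          rw [hphi, hphi, hpq]
        by_contra hne
        have hne1 : p.1 ≠ q.1 := fun hh => hne (Subtype.ext hh)
        rcases MIS.collapse_of_ne inv hinv huniq u p.2 q.2 hne1 hPhi with
          ⟨i, hi, hic⟩ | ⟨j, hj, hjc⟩
        · exact hE i hi hic
        · exact hF j hj hjc
      have hmm : ∀ {a b : S}, a ∈ Set.range phi → b ∈ Set.range phi →
          a * b ∈ Set.range phi := by
        rintro a b ⟨pa, rfl⟩ ⟨pb, rfl⟩
        exact ⟨pa * pb, hmul pa pb⟩
      have hu : u ∈ Set.range phi := by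
        refine ⟨⟨((0:ℤ),1,1), by rw [MIS.InF_mk]; omega⟩, ?_⟩
        apply WithOne.coe_inj.mp
        refine (hphi _).symm.trans ?_
        exact MIS.Phi_gen inv hinv huniq u
      have hinvmem : ∀ a ∈ (⟨Set.range phi, hmm⟩ : Subsemigroup S),
          inv a ∈ (⟨Set.range phi, hmm⟩ : Subsemigroup S) := by
        rintro a ⟨pa, rfl⟩
        refine ⟨⟨MIS.pinv pa.1, MIS.InF_pinv pa.2⟩, ?_⟩
        exact MIS.Phi_pinv_eq_inv inv hinv huniq u pa.1 pa.2 (phi pa) _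
          (hphi pa) (hphi ⟨MIS.pinv pa.1, MIS.InF_pinv pa.2⟩)
      have hsurj : Function.Surjective phi := by
        intro s
        exact hgen ⟨Set.range phi, hmm⟩ hu hinvmem s
      exact ⟨(MulEquiv.mk (Equiv.ofBijective phi ⟨hinj, hsurj⟩) hmul).symm⟩
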